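/- arXiv:1106.2337 — 2 statements merged into one kernel-verified Lean document; each statement's English description precedes it below -/
import Mathlib

section
/- Let a_{0,0},a_{0,1},a_{0,2},a_{0,3},a_{1,1},a_{1,2},a_{2,1},a_{2,2},a_{3,1} be nonnegative reals and let K_0 = Σ_{i=0}^3 a_{0,i} e_i e_i*, K_1 = a_{1,1} e_0 e_1* + a_{1,2} e_2 e_3*, K_2 = a_{2,1} e_0 e_2* + a_{2,2} e_1 e_3*, K_3 = a_{3,1} e_0 e_3* in M_4(ℂ). Define K'_0 = a_{0,0} e_0 e_0* + a_{1,1} e_1 e_1* + a_{2,1} e_2 e_2* + a_{3,1} e_3 e_3*, K'_1 = a_{0,1} e_0 e_1* + a_{2,2} e_2 e_3*, K'_2 = a_{0,2} e_0 e_2* + a_{1,2} e_1 e_3*, K'_3 = a_{0,3} e_0 e_3*. Then for every ρ ∈ M_4(ℂ), the 4×4 matrix whose (j,k) entry is tr(K_j ρ K_k†) equals Σ_{μ=0}^3 K'_μ ρ K'_μ†. In particular, the complementary channel of a map with Kraus operators of this structural form again has Kraus operators of the same structural form. -/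
open Matrix

/-- The Kraus operators `K_0, K_1, K_2, K_3` of the structural form (krausform). -/
noncomputable def Kop (a00 a01 a02 a03 a11 a12 a21 a22 a31 : ℝ) :
    Fin 4 → Matrix (Fin 4) (Fin 4) ℂ
  | 0 => Matrix.single 0 0 (a00 : ℂ) + Matrix.single 1 1 (a01 : ℂ)
        + Matrix.single 2 2 (a02 : ℂ) + Matrix.single 3 3 (a03 : ℂ)
  | 1 => Matrix.single 0 1 (a11 : ℂ) + Matrix.single 2 3 (a12 : ℂ)
  | 2 => Matrix.single 0 2 (a21 : ℂ) + Matrix.single 1 3 (a22 : ℂ)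
  | 3 => Matrix.single 0 3 (a31 : ℂ)

/-- The Kraus operators `K'_0, K'_1, K'_2, K'_3` of the complementary channel. -/
noncomputable def Kop' (a00 a01 a02 a03 a11 a12 a21 a22 a31 : ℝ) :
    Fin 4 → Matrix (Fin 4) (Fin 4) ℂ
  | 0 => Matrix.single 0 0 (a00 : ℂ) + Matrix.single 1 1 (a11 : ℂ)
        + Matrix.single 2 2 (a21 : ℂ) + Matrix.single 3 3 (a31 : ℂ)
  | 1 => Matrix.single 0 1 (a01 : ℂ) + Matrix.single 2 3 (a22 : ℂ)
  | 2 => Matrix.single 0 2 (a02 : ℂ) + Matrix.single 1 3 (a12 : ℂ)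
  | 3 => Matrix.single 0 3 (a03 : ℂ)


lemma key {n : Type*} [Fintype n] [DecidableEq n] (i j k l : n) (c d : ℂ)
    (ρ : Matrix n n ℂ) :
    single i j c * ρ * (single k l d)ᴴ
      = single i k (c * ρ j l * (starRingEnd ℂ) d) := by
  ext a b
  simp only [Matrix.mul_apply, Matrix.single, Matrix.conjTranspose_apply,
    Matrix.of_apply, ite_mul, mul_ite, zero_mul, mul_zero,
    Finset.sum_ite_eq, Finset.sum_ite_eq', Finset.mem_univ, if_true, ite_and]
  split <;> split <;>
    simp [apply_ite (starRingEnd ℂ), Finset.sum_ite_eq, mul_assoc]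

lemma tr_std {n : Type*} [Fintype n] [DecidableEq n] (i k : n) (e : ℂ) :
    (single i k e).trace = if i = k then e else 0 := by
  rcases eq_or_ne i k with rfl | h
  · simp [Matrix.trace_single_eq_same]
  · rw [Matrix.trace_single_eq_of_ne _ _ _ h, if_neg h]

set_option maxHeartbeats 2000000 in
lemma std_apply {n : Type*} [DecidableEq n] (i j a b : n) (c : ℂ) :
    single i j c a b = if i = a ∧ j = b then c else 0 := rfl

/-- The complementary channel `ρ ↦ [tr(K_j ρ K_k†)]_{j,k}` of a channel with
Kraus operators of the structural form (krausform) has Kraus operators `K'_μ` of the same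
structural form. -/
theorem complementary_of_structured_kraus
    (a00 a01 a02 a03 a11 a12 a21 a22 a31 : ℝ)
    (h00 : 0 ≤ a00) (h01 : 0 ≤ a01) (h02 : 0 ≤ a02) (h03 : 0 ≤ a03)
    (h11 : 0 ≤ a11) (h12 : 0 ≤ a12) (h21 : 0 ≤ a21) (h22 : 0 ≤ a22) (h31 : 0 ≤ a31)
    (ρ : Matrix (Fin 4) (Fin 4) ℂ) :
    (Matrix.of fun (j k : Fin 4) =>
        (Kop a00 a01 a02 a03 a11 a12 a21 a22 a31 j * ρ *
          (Kop a00 a01 a02 a03 a11 a12 a21 a22 a31 k)ᴴ).trace)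
      = ∑ μ : Fin 4, Kop' a00 a01 a02 a03 a11 a12 a21 a22 a31 μ * ρ *
          (Kop' a00 a01 a02 a03 a11 a12 a21 a22 a31 μ)ᴴ := by
  ext j k
  fin_cases j <;> fin_cases k <;>
    simp [Kop, Kop', Fin.sum_univ_four, add_mul, mul_add, Matrix.conjTranspose_add, key,
      tr_std, Matrix.trace_add, Matrix.add_apply, Matrix.sum_apply, std_apply] <;> try ring
end

section
/- Let N(ρ) = Σ_k A_k ρ A_k† be a map on 2^m × 2^m complex matrices given by a finite Kraus family. For each label v = (a,b) with a,b : Fin m → ZMod 2, let W_v be the Kronecker product over i of X^{a(i)} Z^{b(i)}, so that W_v W_{v'} = ± W_{v+v'}. Define Ñ(ρ) := Σ_v 4^{−m} · W_v N(W_v ρ W_v†) W_v† ⊗ E_{v,v}, a matrix in M_{2^m}(ℂ) ⊗ M_{4^m}(ℂ) with the second factor indexed by the labels v, where E_{v,v} is the matrix unit. Then for every label u and every ρ: Ñ(W_u ρ W_u†) = (W_u ⊗ Π_u) Ñ(ρ) (W_u ⊗ Π_u)†, where Π_u is the permutation matrix on the label space sending basis vector e_v to e_{v+u}. -/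
open Matrix Kronecker

/-- The Pauli matrices `X` and `Z`. -/
noncomputable def pauliX : Matrix (Fin 2) (Fin 2) ℂ := !![0, 1; 1, 0]
noncomputable def pauliZ : Matrix (Fin 2) (Fin 2) ℂ := !![1, 0; 0, -1]

/-- Labels for the `m`-qubit Pauli group modulo phases: pairs `(a, b)` of `ZMod 2`-vectors. -/
abbrev PauliLabel (m : ℕ) := ((Fin m → ZMod 2) × (Fin m → ZMod 2))

/-- The Pauli-group representative `W_{(a,b)}`: the `m`-fold Kronecker product of
`X^{a(i)} Z^{b(i)}`. -/
noncomputable def Wlabel {m : ℕ} (v : PauliLabel m) :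
    Matrix (Fin m → Fin 2) (Fin m → Fin 2) ℂ :=
  Matrix.of fun c d => ∏ i, (pauliX ^ (v.1 i).val * pauliZ ^ (v.2 i).val) (c i) (d i)

/-- The channel `N(ρ) = Σ_k A_k ρ A_k†` given by a Kraus family. -/
noncomputable def Nch {m : ℕ} {ι : Type*} [Fintype ι]
    (A : ι → Matrix (Fin m → Fin 2) (Fin m → Fin 2) ℂ)
    (ρ : Matrix (Fin m → Fin 2) (Fin m → Fin 2) ℂ) :
    Matrix (Fin m → Fin 2) (Fin m → Fin 2) ℂ :=
  ∑ k, A k * ρ * (A k)ᴴ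

/-- The flagged twirled channel
`Ñ(ρ) = Σ_v 4^{−m} (W_v N(W_v ρ W_v†) W_v†) ⊗ E_{v,v}`. -/
noncomputable def Ntilde {m : ℕ} {ι : Type*} [Fintype ι]
    (A : ι → Matrix (Fin m → Fin 2) (Fin m → Fin 2) ℂ)
    (ρ : Matrix (Fin m → Fin 2) (Fin m → Fin 2) ℂ) :
    Matrix ((Fin m → Fin 2) × PauliLabel m) ((Fin m → Fin 2) × PauliLabel m) ℂ :=
  ∑ v : PauliLabel m, ((4 : ℂ) ^ m)⁻¹ •
    ((Wlabel v * Nch A (Wlabel v * ρ * (Wlabel v)ᴴ) * (Wlabel v)ᴴ) ⊗ₖ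
      Matrix.single v v 1)

/-- The permutation matrix `Π_u` on the label space sending `e_v` to `e_{v+u}`. -/
noncomputable def Pperm {m : ℕ} (u : PauliLabel m) : Matrix (PauliLabel m) (PauliLabel m) ℂ :=
  Matrix.of fun w v => if w = v + u then 1 else 0

lemma pauli_mul_nat (a b c d : ℕ) (ha : a < 2) (hb : b < 2) (hc : c < 2) (hd : d < 2) :
    (pauliX ^ a * pauliZ ^ b) * (pauliX ^ c * pauliZ ^ d)
      = ((-1:ℂ) ^ (b * c)) • (pauliX ^ ((a+c) % 2) * pauliZ ^ ((b+d) % 2)) := by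
  interval_cases a <;> interval_cases b <;> interval_cases c <;> interval_cases d <;>
  · norm_num
    try {
    ext i j
    fin_cases i <;> fin_cases j <;>
      simp [pauliX, pauliZ, Matrix.mul_apply, Fin.sum_univ_two, Matrix.one_apply] <;> ring }

lemma pauli_mul (α β γ δ : ZMod 2) :
    (pauliX ^ α.val * pauliZ ^ β.val) * (pauliX ^ γ.val * pauliZ ^ δ.val)
      = ((-1:ℂ) ^ (β.val * γ.val)) • (pauliX ^ ((α+γ:ZMod 2)).val * pauliZ ^ ((β+δ:ZMod 2)).val) := by
  rw [ZMod.val_add, ZMod.val_add]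
  exact pauli_mul_nat _ _ _ _ (ZMod.val_lt α) (ZMod.val_lt β) (ZMod.val_lt γ) (ZMod.val_lt δ)

lemma Wlabel_mul {m : ℕ} (v w : PauliLabel m) :
    Wlabel v * Wlabel w
      = ((-1:ℂ) ^ (∑ i, (v.2 i).val * (w.1 i).val)) • Wlabel (v + w) := by
  ext c d
  simp only [Matrix.mul_apply, Wlabel, Matrix.of_apply, Matrix.smul_apply, smul_eq_mul]
  calc ∑ e : Fin m → Fin 2, (∏ i, (pauliX ^ (v.1 i).val * pauliZ ^ (v.2 i).val) (c i) (e i)) *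
        ∏ i, (pauliX ^ (w.1 i).val * pauliZ ^ (w.2 i).val) (e i) (d i)
      = ∑ e : Fin m → Fin 2, ∏ i, ((pauliX ^ (v.1 i).val * pauliZ ^ (v.2 i).val) (c i) (e i) *
          (pauliX ^ (w.1 i).val * pauliZ ^ (w.2 i).val) (e i) (d i)) := by
        simp_rw [Finset.prod_mul_distrib]
    _ = ∏ i, ∑ j : Fin 2, ((pauliX ^ (v.1 i).val * pauliZ ^ (v.2 i).val) (c i) j *
          (pauliX ^ (w.1 i).val * pauliZ ^ (w.2 i).val) j (d i)) := by
        rw [Finset.prod_univ_sum]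
        rfl
    _ = ∏ i, ((pauliX ^ (v.1 i).val * pauliZ ^ (v.2 i).val) *
          (pauliX ^ (w.1 i).val * pauliZ ^ (w.2 i).val)) (c i) (d i) := by
        simp [Matrix.mul_apply]
    _ = _ := by
        simp_rw [pauli_mul, Matrix.smul_apply, smul_eq_mul, Finset.prod_mul_distrib,
          Finset.prod_pow_eq_pow_sum]
        rfl

lemma W_conj_conj {m : ℕ} (v w : PauliLabel m)
    (ρ : Matrix (Fin m → Fin 2) (Fin m → Fin 2) ℂ) :
    Wlabel v * (Wlabel w * ρ * (Wlabel w)ᴴ) * (Wlabel v)ᴴ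
      = Wlabel (v + w) * ρ * (Wlabel (v + w))ᴴ := by
  have h := Wlabel_mul v w
  have h1 : Wlabel v * (Wlabel w * ρ * (Wlabel w)ᴴ) * (Wlabel v)ᴴ
      = (Wlabel v * Wlabel w) * ρ * (Wlabel v * Wlabel w)ᴴ := by
    rw [Matrix.conjTranspose_mul]
    simp only [mul_assoc]
  rw [h1, h, Matrix.conjTranspose_smul, smul_mul_assoc, smul_mul_assoc,
    mul_smul_comm, smul_smul]
  have hc : ((-1:ℂ) ^ (∑ i, (v.2 i).val * (w.1 i).val)) *
      star ((-1:ℂ) ^ (∑ i, (v.2 i).val * (w.1 i).val)) = 1 := by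
    rw [star_pow, star_neg, star_one, ← pow_add, ← two_mul, pow_mul]
    norm_num
  rw [hc, one_smul]

lemma label_add_self {m : ℕ} (u : PauliLabel m) : u + u = 0 := by
  have : ∀ a : ZMod 2, a + a = 0 := by decide
  exact Prod.ext (funext fun i => this _) (funext fun i => this _)

lemma Pperm_conj {m : ℕ} (u w : PauliLabel m) :
    Pperm u * Matrix.single w w 1 * (Pperm u)ᴴ
      = Matrix.single (w + u) (w + u) 1 := by
  have key : ∀ x : PauliLabel m,
      (∑ q : PauliLabel m, if x = q + u then if w = q then (1:ℂ) else 0 else 0)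
        = if x = w + u then 1 else 0 := by
    intro x
    have hswap : ∀ q : PauliLabel m, (if x = q + u then if w = q then (1:ℂ) else 0 else 0)
        = if q = w then (if x = q + u then (1:ℂ) else 0) else 0 := by
      intro q
      by_cases h1 : q = w
      · subst h1; simp
      · simp [h1, show ¬ w = q from fun h => h1 h.symm]
    simp_rw [hswap, Finset.sum_ite_eq', Finset.mem_univ, if_true]
  ext x y
  simp only [Matrix.mul_apply, Matrix.conjTranspose_apply, Pperm, Matrix.of_apply,
    Matrix.single, Matrix.of_apply, apply_ite (star : ℂ → ℂ), star_one, star_zero,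
    mul_ite, ite_mul, mul_one, mul_zero, one_mul, zero_mul, Finset.sum_ite_eq,
    Finset.sum_ite_eq', Finset.mem_univ, if_true, ite_and]
  by_cases hx : x = w + u
  · subst hx
    simp only [if_true]
    rw [key]
    simp [eq_comm]
  · simp [hx, show ¬ w + u = x from fun h => hx h.symm]

lemma kron_conjT {n p : Type*} (A : Matrix n n ℂ) (B : Matrix p p ℂ) :
    (A ⊗ₖ B)ᴴ = Aᴴ ⊗ₖ Bᴴ := by
  ext ⟨i,j⟩ ⟨k,l⟩
  simp [Matrix.conjTranspose_apply, Matrix.kroneckerMap_apply, star_mul', mul_comm]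

/-- The flagged twirled channel `Ñ` satisfies, for every Pauli label `u`,
`Ñ(W_u ρ W_u†) = (W_u ⊗ Π_u) Ñ(ρ) (W_u ⊗ Π_u)†`. -/
theorem Ntilde_pauli_covariance (m : ℕ) (ι : Type*) [Fintype ι]
    (A : ι → Matrix (Fin m → Fin 2) (Fin m → Fin 2) ℂ)
    (u : PauliLabel m) (ρ : Matrix (Fin m → Fin 2) (Fin m → Fin 2) ℂ) :
    Ntilde A (Wlabel u * ρ * (Wlabel u)ᴴ)
      = (Wlabel u ⊗ₖ Pperm u) * Ntilde A ρ * (Wlabel u ⊗ₖ Pperm u)ᴴ := by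
  have huu : u + u = 0 := label_add_self u
  unfold Ntilde
  rw [Finset.mul_sum, Finset.sum_mul]
  refine (Fintype.sum_equiv (Equiv.addRight u) _ _ fun v => ?_).symm
  simp only [Equiv.coe_addRight]
  rw [mul_smul_comm, smul_mul_assoc]
  congr 1
  rw [kron_conjT, ← Matrix.mul_kronecker_mul, ← Matrix.mul_kronecker_mul,
    W_conj_conj u v (Nch A (Wlabel v * ρ * (Wlabel v)ᴴ)), Pperm_conj,
    W_conj_conj (v + u) u ρ, add_assoc, huu, add_zero, add_comm u v]
end
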